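/- Consider the sequences produced by Algorithm AGM-EF-1 (as specified in the context). Set a₀ := 1 and, for 0 ≤ i ≤ k, b_k(i) := a_i ∏_{j=i+1}^{k} (1 − a_j). Then for every k ≥ 1, Σ_{i=0}^{k} b_k(i) = 1, and for every x ∈ dom Ψ, q_k(x) ≤ (L/σ) b_k(0) Δ(x, u₀) + Ψ(x) + Σ_{i=0}^{k} b_k(i) ℓ_f(x; u_i, λ1). -/

import Mathlib

noncomputable section

open scoped BigOperators

/-- Bregman divergence induced by `d`. -/
def breg {E : Type*} [NormedAddCommGroup E] [NormedSpace ℝ E]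
    (d : E → ℝ) (x y : E) : ℝ :=
  d x - d y - fderiv ℝ d y (x - y)

/-- `d` is `σ`-strongly convex with respect to the norm `‖·‖`. -/
def StrongConvexOnNorm {E : Type*} [NormedAddCommGroup E] [NormedSpace ℝ E]
    (σ : ℝ) (d : E → ℝ) : Prop :=
  ∀ x y : E, d x ≥ d y + fderiv ℝ d y (x - y) + σ / 2 * ‖x - y‖ ^ 2

/-- `g` is a subgradient of the extended-real-valued function `h` at `y`. -/
def IsSubgradE {E : Type*} [NormedAddCommGroup E] [NormedSpace ℝ E]
    (h : E → EReal) (y : E) (g : E →L[ℝ] ℝ) : Prop :=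
  ∀ x, h x ≥ h y + ((g (x - y) : ℝ) : EReal)

/-- `h` is `lam`-strongly convex with respect to `d` (extended-real-valued version). -/
def ScWrtE {E : Type*} [NormedAddCommGroup E] [NormedSpace ℝ E]
    (d : E → ℝ) (lam : ℝ) (h : E → EReal) : Prop :=
  ∀ y : E, h y ≠ ⊤ → ∀ g : E →L[ℝ] ℝ, IsSubgradE h y g →
    ∀ x, h x ≥ h y + ((g (x - y) + lam * breg d x y : ℝ) : EReal)

/-- `f` is `lam`-strongly convex with respect to `d` (real-valued version). -/
def ScWrtR {E : Type*} [NormedAddCommGroup E] [NormedSpace ℝ E]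
    (d : E → ℝ) (lam : ℝ) (f : E → ℝ) : Prop :=
  ∀ y : E, ∀ g : E →L[ℝ] ℝ, (∀ x, f x ≥ f y + g (x - y)) →
    ∀ x, f x ≥ f y + g (x - y) + lam * breg d x y

/-- Convexity for extended-real-valued functions. -/
def ConvexE {E : Type*} [NormedAddCommGroup E] [NormedSpace ℝ E]
    (h : E → EReal) : Prop :=
  ∀ x y : E, ∀ a b : ℝ, 0 ≤ a → 0 ≤ b → a + b = 1 →
    h (a • x + b • y) ≤ ((a : ℝ) : EReal) * h x + ((b : ℝ) : EReal) * h y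

/-- The lower model `ℓ_f(x; y, lam1)`. -/
def ellf {E : Type*} [NormedAddCommGroup E] [NormedSpace ℝ E]
    (d : E → ℝ) (f : E → ℝ) (lam1 : ℝ) (x y : E) : ℝ :=
  f y + fderiv ℝ f y (x - y) + lam1 * breg d x y



lemma lin_split {E : Type*} [NormedAddCommGroup E] [NormedSpace ℝ E]
    (A : E →L[ℝ] ℝ) (x z u : E) : A (x - u) = A (x - z) + A (z - u) := by
  rw [← map_add]; congr 1; abel

lemma breg_three {E : Type*} [NormedAddCommGroup E] [NormedSpace ℝ E]
    (d : E → ℝ) (x z u : E) :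
    breg d x u = breg d z u + (fderiv ℝ d z (x - z) - fderiv ℝ d u (x - z)) + breg d x z := by
  unfold breg
  rw [lin_split (fderiv ℝ d u) x z u]
  ring


lemma breg_nonneg {E : Type*} [NormedAddCommGroup E] [NormedSpace ℝ E]
    {σ : ℝ} (hσ : 0 < σ) {d : E → ℝ} (hdsc : StrongConvexOnNorm σ d) (x y : E) :
    0 ≤ breg d x y := by
  have h := hdsc x y
  have : 0 ≤ σ / 2 * ‖x - y‖ ^ 2 := by positivity
  unfold breg; linarith

lemma slope_tendsto {E : Type*} [NormedAddCommGroup E] [NormedSpace ℝ E]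
    {d : E → ℝ} (hd : Differentiable ℝ d) (z v : E) :
    Filter.Tendsto (fun t : ℝ => breg d (z + t • v) z / t) (nhdsWithin 0 (Set.Ioi 0)) (nhds 0) := by
  have hline : HasDerivAt (fun t : ℝ => z + t • v) v 0 := by
    simpa using ((hasDerivAt_id (0:ℝ)).smul_const v).const_add z
  have hcomp : HasDerivAt (fun t : ℝ => d (z + t • v)) (fderiv ℝ d z v) 0 := by
    have := (hd (z + (0:ℝ) • v)).hasFDerivAt.comp_hasDerivAt 0 hline
    rw [zero_smul, add_zero] at this; exact this
  have hs := hasDerivAt_iff_tendsto_slope.1 hcomp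
  have hs' : Filter.Tendsto (slope (fun t : ℝ => d (z + t • v)) 0)
      (nhdsWithin 0 (Set.Ioi 0)) (nhds (fderiv ℝ d z v)) :=
    hs.mono_left (nhdsWithin_mono _ (by intro t ht; exact ne_of_gt ht))
  have h0 : Filter.Tendsto (fun t : ℝ => slope (fun s : ℝ => d (z + s • v)) 0 t - fderiv ℝ d z v)
      (nhdsWithin 0 (Set.Ioi 0)) (nhds 0) := by
    simpa using hs'.sub_const (fderiv ℝ d z v)
  refine h0.congr' ?_
  filter_upwards [self_mem_nhdsWithin] with t ht
  have ht' : (t:ℝ) ≠ 0 := ne_of_gt ht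
  simp only [slope_def_field, breg, zero_smul, add_zero, sub_zero, add_sub_cancel_left, map_smul, smul_eq_mul]
  field_simp

lemma key {E : Type*} [NormedAddCommGroup E] [NormedSpace ℝ E]
    {σ : ℝ} (hσ : 0 < σ) {d : E → ℝ} (hd : Differentiable ℝ d)
    (hdsc : StrongConvexOnNorm σ d)
    {lam2 : ℝ} {Ψ : E → EReal} (hbot : ∀ x, Ψ x ≠ ⊥) (hconv : ConvexE Ψ)
    (hsc : ScWrtE d lam2 Ψ)
    {μ cc : ℝ} (hμ : 0 ≤ μ) (hcc : 0 < cc)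
    (R : E → ℝ) (z : E) (G : E →L[ℝ] ℝ)
    (hR : ∀ x, R x = R z + G (x - z) + μ * breg d x z)
    (φ : E → EReal) (hφ : ∀ x, φ x = ((R x : ℝ) : EReal) + ((cc : ℝ) : EReal) * Ψ x)
    (hzt : Ψ z ≠ ⊤) (hmin : ∀ x, φ z ≤ φ x) :
    ∀ x, φ z + (((μ + cc * lam2) * breg d x z : ℝ) : EReal) ≤ φ x := by
  set pz : ℝ := (Ψ z).toReal with hpz
  have hpze : ((pz : ℝ) : EReal) = Ψ z := EReal.coe_toReal hzt (hbot z)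
  -- subgradient
  set g : E →L[ℝ] ℝ := (-(cc⁻¹)) • G with hg
  have hsub : IsSubgradE Ψ z g := by
    intro x
    by_cases hx : Ψ x = ⊤
    · rw [hx]; exact le_top
    set px : ℝ := (Ψ x).toReal with hpx
    have hpxe : ((px : ℝ) : EReal) = Ψ x := EReal.coe_toReal hx (hbot x)
    set v : E := x - z with hv
    have hkey : 0 ≤ G v + cc * (px - pz) := by
      have hev : ∀ t ∈ Set.Ioc (0:ℝ) 1,
          -(G v + cc * (px - pz)) ≤ μ * (breg d (z + t • v) z / t) := by
        intro t ht
        obtain ⟨ht0, ht1⟩ := ht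
        have hconvt := hconv x z t (1 - t) (le_of_lt ht0) (by linarith) (by ring)
        have hzt' : z + t • v = t • x + (1 - t) • z := by
          simp [hv, smul_sub, sub_smul]; abel
        set pt : ℝ := (Ψ (z + t • v)).toReal with hptd
        have hΨt_le : Ψ (z + t • v) ≤ ((t * px + (1 - t) * pz : ℝ) : EReal) := by
          rw [hzt']
          calc Ψ (t • x + (1 - t) • z) ≤ ((t:ℝ):EReal) * Ψ x + (((1-t):ℝ):EReal) * Ψ z := hconvt
            _ = ((t * px + (1 - t) * pz : ℝ) : EReal) := by
                rw [← hpxe, ← hpze, ← EReal.coe_mul, ← EReal.coe_mul, ← EReal.coe_add]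
        have hΨt_ne_top : Ψ (z + t • v) ≠ ⊤ :=
          fun h => by rw [h] at hΨt_le; exact (EReal.coe_ne_top _) (top_le_iff.mp hΨt_le)
        have hpte : ((pt : ℝ) : EReal) = Ψ (z + t • v) := EReal.coe_toReal hΨt_ne_top (hbot _)
        have hptle : pt ≤ t * px + (1 - t) * pz := by
          rw [← EReal.coe_le_coe_iff]; rw [hpte]; exact hΨt_le
        -- minimality in reals
        have hminr : R z + cc * pz ≤ R (z + t • v) + cc * pt := by
          have h1 := hmin (z + t • v)
          rw [hφ z, hφ (z + t • v), ← hpze, ← hpte] at h1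
          rw [← EReal.coe_mul, ← EReal.coe_mul, ← EReal.coe_add, ← EReal.coe_add] at h1
          exact EReal.coe_le_coe_iff.mp h1
        have hRt : R (z + t • v) = R z + t * G v + μ * breg d (z + t • v) z := by
          have := hR (z + t • v)
          simpa [map_smul, smul_eq_mul] using this
        set B : ℝ := breg d (z + t • v) z with hB
        have h2 : 0 ≤ t * G v + μ * B + cc * t * (px - pz) := by nlinarith
        rw [show μ * (B / t) = (μ * B) / t from mul_div_assoc' μ B t, le_div_iff₀ ht0]
        nlinarith
      have hT : Filter.Tendsto (fun t : ℝ => μ * (breg d (z + t • v) z / t))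
          (nhdsWithin 0 (Set.Ioi 0)) (nhds 0) := by
        simpa using (slope_tendsto hd z v).const_mul μ
      have hIoc : Set.Ioc (0:ℝ) 1 ∈ nhdsWithin (0:ℝ) (Set.Ioi 0) :=
        Ioc_mem_nhdsGT_of_mem ⟨le_refl 0, zero_lt_one⟩
      have := ge_of_tendsto hT (by filter_upwards [hIoc] with t ht using hev t ht)
      linarith
    rw [← hpxe, ← hpze]
    have : pz + g (x - z) ≤ px := by
      have hgv : g (x - z) = -(cc⁻¹) * G v := by simp [hg, hv]
      rw [hgv]
      have h3 : cc * (px - pz) ≥ -(G v) := by linarith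
      have h4 : -(cc⁻¹) * (G v) ≤ px - pz := by
        have hcc' : (0:ℝ) < cc⁻¹ := by positivity
        have h5 := mul_le_mul_of_nonneg_left h3 (le_of_lt hcc')
        have h6 : cc⁻¹ * (cc * (px - pz)) = px - pz := by field_simp
        linarith
      linarith
    calc ((pz:ℝ):EReal) + ((g (x-z) : ℝ) : EReal) = ((pz + g (x - z) : ℝ) : EReal) := by
          rw [EReal.coe_add]
      _ ≤ ((px : ℝ):EReal) := EReal.coe_le_coe_iff.mpr this
  -- strong convexity of Ψ
  have hscz := hsc z hzt g hsub
  intro x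
  by_cases hx : Ψ x = ⊤
  · have : φ x = ⊤ := by
      rw [hφ x, hx, EReal.mul_top_of_pos (EReal.coe_pos.2 hcc), EReal.coe_add_top]
    rw [this]; exact le_top
  · set px : ℝ := (Ψ x).toReal with hpx
    have hpxe : ((px : ℝ) : EReal) = Ψ x := EReal.coe_toReal hx (hbot x)
    have hsx := hscz x
    have hsxr : pz + (g (x - z) + lam2 * breg d x z) ≤ px := by
      rw [ge_iff_le, ← hpxe, ← hpze, ← EReal.coe_add] at hsx
      exact EReal.coe_le_coe_iff.mp hsx
    have hgv : g (x - z) = -(cc⁻¹) * G (x - z) := by simp [hg]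
    rw [hφ x, hφ z, ← hpxe, ← hpze, ← EReal.coe_mul, ← EReal.coe_mul,
      ← EReal.coe_add, ← EReal.coe_add, ← EReal.coe_add]
    rw [EReal.coe_le_coe_iff]
    have hRx := hR x
    have hccg : cc * g (x - z) = -(G (x - z)) := by
      rw [hgv]; field_simp
    have h7 := mul_le_mul_of_nonneg_left hsxr (le_of_lt hcc)
    have h8 : cc * (pz + (g (x - z) + lam2 * breg d x z))
        = cc * pz + cc * g (x - z) + cc * lam2 * breg d x z := by ring
    rw [h8, hccg] at h7
    linarith [hRx, h7]

lemma er1 (x : EReal) (hx : x ≠ ⊥) (γ δ p l : ℝ) (hγ : 0 < γ) (hδ : 0 < δ)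
    (hsum : γ + δ = 1) :
    ((γ:ℝ):EReal) * (((p:ℝ):EReal) + x) + ((δ:ℝ):EReal) * (((l:ℝ):EReal) + x)
      = ((γ*p + δ*l : ℝ):EReal) + ((1:ℝ):EReal) * x := by
  induction x using EReal.rec with
  | bot => exact absurd rfl hx
  | coe r =>
      rw [← EReal.coe_add, ← EReal.coe_add, ← EReal.coe_mul, ← EReal.coe_mul,
        ← EReal.coe_mul, ← EReal.coe_add, ← EReal.coe_add]
      rw [EReal.coe_eq_coe_iff]
      linear_combination r * hsum
  | top =>
      rw [EReal.coe_add_top, EReal.coe_add_top,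
        EReal.mul_top_of_pos (EReal.coe_pos.2 hγ), EReal.mul_top_of_pos (EReal.coe_pos.2 hδ),
        EReal.mul_top_of_pos (EReal.coe_pos.2 one_pos), EReal.top_add_top, EReal.coe_add_top]

lemma er2 (x : EReal) (hx : x ≠ ⊥) (γ δ qr l : ℝ) (hδ : 0 < δ) :
    ((γ:ℝ):EReal) * ((qr:ℝ):EReal) + ((δ:ℝ):EReal) * (((l:ℝ):EReal) + x)
      = ((γ*qr + δ*l : ℝ):EReal) + ((δ:ℝ):EReal) * x := by
  induction x using EReal.rec with
  | bot => exact absurd rfl hx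
  | coe r =>
      rw [← EReal.coe_add, ← EReal.coe_mul, ← EReal.coe_mul, ← EReal.coe_mul,
        ← EReal.coe_add, ← EReal.coe_add]
      rw [EReal.coe_eq_coe_iff]; ring
  | top =>
      rw [EReal.coe_add_top, EReal.mul_top_of_pos (EReal.coe_pos.2 hδ),
        ← EReal.coe_mul, EReal.coe_add_top]
      rw [EReal.add_top_of_ne_bot (EReal.coe_ne_bot _)]

lemma step_core {E : Type*} [NormedAddCommGroup E] [NormedSpace ℝ E]
    {σ : ℝ} (hσ : 0 < σ) {d : E → ℝ} (hddiff : Differentiable ℝ d)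
    (hdsc : StrongConvexOnNorm σ d)
    {lam2 : ℝ} {Ψ : E → EReal} (hΨbot : ∀ x, Ψ x ≠ ⊥) (hΨconv : ConvexE Ψ)
    (hΨsc : ScWrtE d lam2 Ψ)
    {μ cc : ℝ} (hμ : 0 ≤ μ) (hcc : 0 < cc)
    (R : E → ℝ) (zz : E) (G : E →L[ℝ] ℝ)
    (hRid : ∀ x, R x = R zz + G (x - zz) + μ * breg d x zz)
    (φq ψf : E → EReal)
    (hφform : ∀ x, ψf x = ((R x : ℝ):EReal) + ((cc:ℝ):EReal) * Ψ x)
    (hmin : ∀ w, ψf zz ≤ ψf w)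
    {cnew : ℝ} (hmod : μ + cc * lam2 = cnew)
    (hq' : ∀ w, φq w = ((cnew * breg d w zz : ℝ):EReal) + ψf zz)
    {u0 : E} (hu0 : Ψ u0 ≠ ⊤)
    (bnd' : E → ℝ)
    (hRbound : ∀ w, Ψ w ≠ ⊤ → R w + cc * (Ψ w).toReal ≤ bnd' w + (Ψ w).toReal) :
    (∀ w, Ψ w ≠ ⊤ → φq w ≤ ((bnd' w : ℝ):EReal) + Ψ w) ∧
      (∃ s : ℝ, ∀ w, φq w = ((cnew * breg d w zz + s : ℝ):EReal)) := by
  have hpu0 : ((((Ψ u0).toReal : ℝ)):EReal) = Ψ u0 := EReal.coe_toReal hu0 (hΨbot u0)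
  have hzt : Ψ zz ≠ ⊤ := by
    intro hz
    have h1 := hmin u0
    rw [hφform u0, hφform zz, hz, ← hpu0, ← EReal.coe_mul, ← EReal.coe_add,
      EReal.mul_top_of_pos (EReal.coe_pos.2 hcc), EReal.coe_add_top] at h1
    exact EReal.coe_ne_top _ (top_le_iff.mp h1)
  set pz : ℝ := (Ψ zz).toReal with hpzd
  have hpze : ((pz : ℝ) : EReal) = Ψ zz := EReal.coe_toReal hzt (hΨbot zz)
  have hψz : ψf zz = ((R zz + cc * pz : ℝ) : EReal) := by
    rw [hφform zz, ← hpze, ← EReal.coe_mul, ← EReal.coe_add]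
  have hkey := key hσ hddiff hdsc hΨbot hΨconv hΨsc hμ hcc R zz G hRid ψf hφform hzt hmin
  refine ⟨?_, ⟨R zz + cc * pz, ?_⟩⟩
  · intro w hw
    have hpwe : (((Ψ w).toReal : ℝ) : EReal) = Ψ w := EReal.coe_toReal hw (hΨbot w)
    have h1 := hkey w
    rw [hmod, hψz, ← EReal.coe_add] at h1
    have h2 : ψf w ≤ ((bnd' w + (Ψ w).toReal : ℝ):EReal) := by
      rw [hφform w, ← hpwe, ← EReal.coe_mul, ← EReal.coe_add]
      exact EReal.coe_le_coe_iff.mpr (hRbound w hw)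
    have h3 := le_trans h1 h2
    rw [hq' w, hψz, ← EReal.coe_add]
    calc ((cnew * breg d w zz + (R zz + cc * pz) : ℝ):EReal)
        = ((R zz + cc * pz + cnew * breg d w zz : ℝ):EReal) := by rw [EReal.coe_eq_coe_iff]; ring
      _ ≤ ((bnd' w + (Ψ w).toReal : ℝ):EReal) := h3
      _ = ((bnd' w : ℝ):EReal) + Ψ w := by rw [EReal.coe_add, hpwe]
  · intro w
    rw [hq' w, hψz, ← EReal.coe_add]

def bcoef (a : ℕ → ℝ) (k i : ℕ) : ℝ := a i * ∏ j ∈ Finset.Icc (i+1) k, (1 - a j)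

lemma bcoef_step (a : ℕ → ℝ) {k i : ℕ} (h : i ≤ k) :
    bcoef a (k+1) i = (1 - a (k+1)) * bcoef a k i := by
  unfold bcoef
  rw [Finset.prod_Icc_succ_top (by omega)]
  ring

lemma bcoef_last (a : ℕ → ℝ) (k : ℕ) : bcoef a (k+1) (k+1) = a (k+1) := by
  unfold bcoef
  rw [Finset.Icc_eq_empty (by omega)]
  simp

def bndF {E : Type*} [NormedAddCommGroup E] [NormedSpace ℝ E]
    (d f : E → ℝ) (lam1 L σ : ℝ) (a : ℕ → ℝ) (u : ℕ → E) (k : ℕ) (w : E) : ℝ :=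
  L/σ * bcoef a k 0 * breg d w (u 0)
    + ∑ i ∈ Finset.range (k+1), bcoef a k i * ellf d f lam1 w (u i)

lemma bndF_step {E : Type*} [NormedAddCommGroup E] [NormedSpace ℝ E]
    (d f : E → ℝ) (lam1 L σ : ℝ) (a : ℕ → ℝ) (u : ℕ → E) (k : ℕ) (w : E) :
    bndF d f lam1 L σ a u (k+1) w
      = (1 - a (k+1)) * bndF d f lam1 L σ a u k w
        + a (k+1) * ellf d f lam1 w (u (k+1)) := by
  unfold bndF
  rw [Finset.sum_range_succ, bcoef_last, bcoef_step a (Nat.zero_le k)]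
  have h1 : (∑ i ∈ Finset.range (k+1), bcoef a (k+1) i * ellf d f lam1 w (u i))
      = (1 - a (k+1)) * ∑ i ∈ Finset.range (k+1), bcoef a k i * ellf d f lam1 w (u i) := by
    rw [Finset.mul_sum]
    refine Finset.sum_congr rfl ?_
    intro i hi
    rw [bcoef_step a (Nat.lt_succ_iff.mp (Finset.mem_range.mp hi))]
    ring
  rw [h1]
  ring

lemma bcoef_sum (a : ℕ → ℝ) (ha0 : a 0 = 1) :
    ∀ k : ℕ, (∑ i ∈ Finset.range (k+1), bcoef a k i) = 1 := by
  intro k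
  induction k with
  | zero =>
      rw [Finset.sum_range_one]
      unfold bcoef
      rw [Finset.Icc_eq_empty (by omega)]
      simp [ha0]
  | succ n ih =>
      rw [Finset.sum_range_succ, bcoef_last]
      have h1 : (∑ i ∈ Finset.range (n+1), bcoef a (n+1) i)
          = (1 - a (n+1)) * ∑ i ∈ Finset.range (n+1), bcoef a n i := by
        rw [Finset.mul_sum]
        refine Finset.sum_congr rfl ?_
        intro i hi
        exact bcoef_step a (Nat.lt_succ_iff.mp (Finset.mem_range.mp hi))
      rw [h1, ih]
      ring
/-- the model `q_k` of AGM-EF-1 is dominated by a convex combination of the linearizations. -/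
theorem stmt17 {E : Type*} [NormedAddCommGroup E] [NormedSpace ℝ E] [FiniteDimensional ℝ E]
    (σ lam1 lam2 L : ℝ) (hσ : 0 < σ) (hlam1 : 0 ≤ lam1) (hlam2 : 0 ≤ lam2)
    (hL : σ * lam1 < L)
    (d : E → ℝ) (hddiff : Differentiable ℝ d) (hdconv : ConvexOn ℝ Set.univ d)
    (hdsc : StrongConvexOnNorm σ d)
    (Ψ : E → EReal) (hΨbot : ∀ x, Ψ x ≠ ⊥) (hΨprop : ∃ x, Ψ x ≠ ⊤)
    (hΨlsc : LowerSemicontinuous Ψ) (hΨconv : ConvexE Ψ) (hΨsc : ScWrtE d lam2 Ψ)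
    (f : E → ℝ) (hfconv : ConvexOn ℝ Set.univ f) (hfdiff : Differentiable ℝ f)
    (hfsc : ScWrtR d lam1 f)
    (hfL : ∀ x y : E, ‖fderiv ℝ f x - fderiv ℝ f y‖ ≤ L * ‖x - y‖)
    -- Algorithm AGM-EF-1
    (x z u : ℕ → E) (a c : ℕ → ℝ) (ψ q : ℕ → E → EReal)
    (hu0 : Ψ (u 0) ≠ ⊤) (hc0 : c 0 = L / σ + lam2)
    (hq0 : ∀ w, q 0 w =
      ((L / σ * breg d w (u 0) + f (u 0) + fderiv ℝ f (u 0) (w - u 0) : ℝ) : EReal) + Ψ w)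
    (hx0 : x 0 = z 0) (hz0min : ∀ w, q 0 (z 0) ≤ q 0 w)
    (hamem : ∀ k, a (k + 1) ∈ Set.Ioo (0 : ℝ) 1)
    (haroot : ∀ k, σ * (1 - a (k + 1)) * (c k + lam2 * a (k + 1)) + σ * lam1 * a (k + 1)
        = L * a (k + 1) ^ 2)
    (hc : ∀ k, c (k + 1) = (1 - a (k + 1)) * c k + (lam1 + lam2) * a (k + 1))
    (hu : ∀ k,
      u (k + 1) =
        ((((1 - a (k + 1)) * c k + lam1 * a (k + 1) + lam2 * a (k + 1) * (1 - a (k + 1)))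
            - lam1 * a (k + 1) * a (k + 1))⁻¹) •
          (((((1 - a (k + 1)) * c k + lam1 * a (k + 1) + lam2 * a (k + 1) * (1 - a (k + 1)))
                - ((1 - a (k + 1)) * c k + lam1 * a (k + 1)) * a (k + 1)) • x k)
            + (((1 - a (k + 1)) * c k * a (k + 1)) • z k)))
    (hψ : ∀ k w, ψ (k + 1) w =
      ((1 - a (k + 1) : ℝ) : EReal) * q k w
        + ((a (k + 1) : ℝ) : EReal) * (((ellf d f lam1 w (u (k + 1)) : ℝ) : EReal) + Ψ w))
    (hz : ∀ k w, ψ (k + 1) (z (k + 1)) ≤ ψ (k + 1) w)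
    (hx : ∀ k, x (k + 1) = (1 - a (k + 1)) • x k + a (k + 1) • z (k + 1))
    (hq : ∀ k w, q (k + 1) w =
      ((c (k + 1) * breg d w (z (k + 1)) : ℝ) : EReal) + ψ (k + 1) (z (k + 1)))
    (ha0 : a 0 = 1) :
    ∀ k : ℕ, 1 ≤ k →
      (∑ i ∈ Finset.range (k + 1), a i * ∏ j ∈ Finset.Icc (i + 1) k, (1 - a j)) = 1 ∧
      ∀ w : E, Ψ w ≠ ⊤ →
        q k w ≤
          ((L / σ * (a 0 * ∏ j ∈ Finset.Icc 1 k, (1 - a j)) * breg d w (u 0) : ℝ) : EReal)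
            + Ψ w
            + ((∑ i ∈ Finset.range (k + 1),
                (a i * ∏ j ∈ Finset.Icc (i + 1) k, (1 - a j)) * ellf d f lam1 w (u i) : ℝ) :
              EReal) := by
  
  have hbreg0 : ∀ x y : E, 0 ≤ breg d x y := fun x y => breg_nonneg hσ hdsc x y
  have hLσ : 0 ≤ L / σ := by
    have : 0 < L := lt_of_le_of_lt (mul_nonneg hσ.le hlam1) hL
    positivity
  have hcnn : ∀ k, 0 ≤ c k := by
    intro k
    induction k with
    | zero => rw [hc0]; linarith
    | succ n ih =>
        rw [hc n]
        have h1 := (hamem n).1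
        have h2 := (hamem n).2
        nlinarith
  have main : ∀ k : ℕ,
      (∀ w, Ψ w ≠ ⊤ → q k w ≤ ((bndF d f lam1 L σ a u k w : ℝ) : EReal) + Ψ w) ∧
      (k = 0 ∨ ∃ s : ℝ, ∀ w, q k w = ((c k * breg d w (z k) + s : ℝ) : EReal)) := by
    intro k
    induction k with
    | zero =>
        refine ⟨?_, Or.inl rfl⟩
        intro w hw
        rw [hq0 w]
        have hb0 : bndF d f lam1 L σ a u 0 w
            = L / σ * breg d w (u 0) + ellf d f lam1 w (u 0) := by
          unfold bndF bcoef
          rw [Finset.sum_range_one]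
          rw [Finset.Icc_eq_empty (by omega : ¬(0 + 1 : ℕ) ≤ 0)]
          simp [ha0]
        refine add_le_add ?_ le_rfl
        rw [EReal.coe_le_coe_iff, hb0]
        have h2 := hbreg0 w (u 0)
        simp only [ellf]
        nlinarith
    | succ n ih =>
        have h0 : 0 < a (n+1) := (hamem n).1
        have h1 : a (n+1) < 1 := (hamem n).2
        rcases ih.2 with hn0 | ⟨s, hsrep⟩
        · -- n = 0
          subst hn0
          refine And.imp_right Or.inr (step_core hσ hddiff hdsc hΨbot hΨconv hΨsc
            (μ := (1 - a 1) * (L/σ) + a 1 * lam1) (cc := 1)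
            (by nlinarith) one_pos
            (fun x => (1 - a 1) * (L/σ * breg d x (u 0) + f (u 0)
                + fderiv ℝ f (u 0) (x - u 0)) + a 1 * ellf d f lam1 x (u 1))
            (z 1)
            (((1 - a 1) * (L/σ)) • (fderiv ℝ d (z 1) - fderiv ℝ d (u 0))
              + (1 - a 1) • fderiv ℝ f (u 0) + (a 1) • fderiv ℝ f (u 1)
              + (a 1 * lam1) • (fderiv ℝ d (z 1) - fderiv ℝ d (u 1)))
            ?_ (q 1) (ψ 1) ?_ (fun w => hz 0 w) ?_ (fun w => hq 0 w) hu0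
            (bndF d f lam1 L σ a u 1) ?_)
          · -- hRid
            intro x
            have hb1 := breg_three d x (z 1) (u 0)
            have hb2 := breg_three d x (z 1) (u 1)
            have hl1 := lin_split (fderiv ℝ f (u 0)) x (z 1) (u 0)
            have hl2 := lin_split (fderiv ℝ f (u 1)) x (z 1) (u 1)
            simp only [ellf, ContinuousLinearMap.add_apply, ContinuousLinearMap.smul_apply,
              ContinuousLinearMap.sub_apply, smul_eq_mul]
            linear_combination ((1 - a 1) * (L/σ)) * hb1 + (a 1 * lam1) * hb2
              + (1 - a 1) * hl1 + (a 1) * hl2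
          · -- hφform
            intro x
            rw [hψ 0 x, hq0 x]
            exact er1 (Ψ x) (hΨbot x) (1 - a 1) (a 1)
              (L/σ * breg d x (u 0) + f (u 0) + fderiv ℝ f (u 0) (x - u 0))
              (ellf d f lam1 x (u 1)) (by linarith) h0 (by ring)
          · -- hmod
            rw [hc 0, hc0]; ring
          · -- hRbound
            intro w hw
            have hb1w : bndF d f lam1 L σ a u 1 w
                = L/σ * ((1 - a 1) * breg d w (u 0))
                  + ((1 - a 1) * ellf d f lam1 w (u 0) + a 1 * ellf d f lam1 w (u 1)) := by
              rw [bndF_step d f lam1 L σ a u 0 w]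
              have hb0 : bndF d f lam1 L σ a u 0 w
                  = L / σ * breg d w (u 0) + ellf d f lam1 w (u 0) := by
                unfold bndF bcoef
                rw [Finset.sum_range_one]
                rw [Finset.Icc_eq_empty (by omega : ¬(0 + 1 : ℕ) ≤ 0)]
                simp [ha0]
              rw [hb0]; ring
            rw [hb1w]
            have h2 := hbreg0 w (u 0)
            have h1' : a 1 < 1 := h1
            simp only [ellf]
            nlinarith [mul_nonneg (mul_nonneg (by linarith : (0:ℝ) ≤ 1 - a 1) hlam1) h2]
        · -- rep case
          refine And.imp_right Or.inr (step_core hσ hddiff hdsc hΨbot hΨconv hΨsc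
            (μ := (1 - a (n+1)) * c n + a (n+1) * lam1) (cc := a (n+1))
            (add_nonneg (mul_nonneg (by linarith) (hcnn n)) (mul_nonneg h0.le hlam1)) h0
            (fun x => (1 - a (n+1)) * (c n * breg d x (z n) + s)
              + a (n+1) * ellf d f lam1 x (u (n+1)))
            (z (n+1))
            (((1 - a (n+1)) * c n) • (fderiv ℝ d (z (n+1)) - fderiv ℝ d (z n))
              + (a (n+1)) • fderiv ℝ f (u (n+1))
              + (a (n+1) * lam1) • (fderiv ℝ d (z (n+1)) - fderiv ℝ d (u (n+1))))
            ?_ (q (n+1)) (ψ (n+1)) ?_ (fun w => hz n w) ?_ (fun w => hq n w) hu0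
            (bndF d f lam1 L σ a u (n+1)) ?_)
          · -- hRid
            intro x
            have hb1 := breg_three d x (z (n+1)) (z n)
            have hb2 := breg_three d x (z (n+1)) (u (n+1))
            have hl2 := lin_split (fderiv ℝ f (u (n+1))) x (z (n+1)) (u (n+1))
            simp only [ellf, ContinuousLinearMap.add_apply, ContinuousLinearMap.smul_apply,
              ContinuousLinearMap.sub_apply, smul_eq_mul]
            linear_combination ((1 - a (n+1)) * c n) * hb1 + (a (n+1) * lam1) * hb2
              + (a (n+1)) * hl2
          · -- hφform
            intro x
            rw [hψ n x, hsrep x]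
            exact er2 (Ψ x) (hΨbot x) (1 - a (n+1)) (a (n+1))
              (c n * breg d x (z n) + s) (ellf d f lam1 x (u (n+1))) h0
          · -- hmod
            rw [hc n]; ring
          · -- hRbound
            intro w hw
            have hpwe : (((Ψ w).toReal : ℝ) : EReal) = Ψ w := EReal.coe_toReal hw (hΨbot w)
            have hQ := ih.1 w hw
            rw [hsrep w, ← hpwe, ← EReal.coe_add] at hQ
            have hQr := EReal.coe_le_coe_iff.mp hQ
            rw [bndF_step d f lam1 L σ a u n w]
            have hmul := mul_le_mul_of_nonneg_left hQr
              (by linarith : (0:ℝ) ≤ 1 - a (n+1))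
            have hexp : (1 - a (n+1)) * (bndF d f lam1 L σ a u n w + (Ψ w).toReal)
                = (1 - a (n+1)) * bndF d f lam1 L σ a u n w
                  + (1 - a (n+1)) * (Ψ w).toReal := by ring
            rw [hexp] at hmul
            linarith
  intro k hk
  refine ⟨bcoef_sum a ha0 k, ?_⟩
  intro w hw
  have h := (main k).1 w hw
  have hsplit : ((bndF d f lam1 L σ a u k w : ℝ) : EReal) + Ψ w
      = ((L / σ * (a 0 * ∏ j ∈ Finset.Icc 1 k, (1 - a j)) * breg d w (u 0) : ℝ) : EReal)
        + Ψ w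
        + ((∑ i ∈ Finset.range (k + 1),
            (a i * ∏ j ∈ Finset.Icc (i + 1) k, (1 - a j)) * ellf d f lam1 w (u i) : ℝ) :
          EReal) := by
    unfold bndF bcoef
    rw [EReal.coe_add]
    rw [add_right_comm]
  rw [← hsplit]
  exact h
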